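/- Let δ ∈ (0, 1/2) and set α := (1 + log(1−δ))/(1 − log δ). If T1 is a balanced (unrooted) phylogenetic tree on n leaves and T2 is an arbitrary (unrooted) phylogenetic tree on the same leaf-set, then mast{T1, T2} ≥ α·log(2n/3). -/

import Mathlib

/-!
# Rooted binary phylogenetic trees

`RTree L` is the type of rooted binary trees with leaves labelled by elements of `L`:
every internal vertex has exactly two children (a left child and a right child), and
a tree with one leaf is a single vertex.
-/

inductive RTree (L : Type) : Type
  | leaf : L → RTree L
  | node : RTree L → RTree L → RTree L

namespace RTree

variable {L : Type}

/-- The list of leaf labels of a rooted binary tree, read from left to right. -/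
def leafList : RTree L → List L
  | leaf b => [b]
  | node l r => leafList l ++ leafList r

/-- The number of leaves of a rooted binary tree. -/
def numLeaves (T : RTree L) : ℕ := T.leafList.length

/-- The set of leaf labels of a rooted binary tree. -/
def leafSet (T : RTree L) : Set L := {b | b ∈ T.leafList}

/-- The height of a rooted binary tree: the maximum distance from the root to a leaf. -/
def height : RTree L → ℕ
  | leaf _ => 0
  | node l r => max (height l) (height r) + 1

/-- A rooted binary tree is balanced if all of its leaves are at the same distance
from the root. -/
def IsBalanced : RTree L → Prop
  | leaf _ => True
  | node l r => IsBalanced l ∧ IsBalanced r ∧ height l = height r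

/-- A rooted binary tree is phylogenetic if its leaves are labelled bijectively by a
finite set, i.e. all leaf labels are distinct. -/
def IsPhylo (T : RTree L) : Prop := T.leafList.Nodup

/-- `Embeds S T` is the subtree relation `S ⪯ T`: there is an injective map `f` from the
vertices of `S` to the vertices of `T` such that `f x = x` for every leaf `x` of `S`
(leaves being identified across trees by their labels) and
`f (x ∧ y) = f x ∧ f y` for all vertices `x`, `y` of `S`, where `∧` denotes the most
recent common ancestor.  Equivalently (for trees with distinct leaf labels), `S` is the
restriction of `T` to the leaf set of `S`, up to rooted isomorphism; this structural
characterization is taken as the definition. -/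
inductive Embeds : RTree L → RTree L → Prop
  | leaf (b : L) : Embeds (RTree.leaf b) (RTree.leaf b)
  | left {S l r : RTree L} : Embeds S l → Embeds S (RTree.node l r)
  | right {S l r : RTree L} : Embeds S r → Embeds S (RTree.node l r)
  | pair {s₁ s₂ l r : RTree L} :
      Embeds s₁ l → Embeds s₂ r → Embeds (RTree.node s₁ s₂) (RTree.node l r)
  | pair_swap {s₁ s₂ l r : RTree L} :
      Embeds s₁ r → Embeds s₂ l → Embeds (RTree.node s₁ s₂) (RTree.node l r)

/-- `mast T₁ T₂` is the maximum cardinality of a subset `X ⊆ L(T₁) ∩ L(T₂)` such that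
the restrictions `T₁|X` and `T₂|X` are isomorphic; equivalently, the maximum number of
leaves of a rooted binary phylogenetic tree `S` with `S ⪯ T₁` and `S ⪯ T₂`. -/
noncomputable def mast (T₁ T₂ : RTree L) : ℕ :=
  sSup {n | ∃ S : RTree L, S.IsPhylo ∧ Embeds S T₁ ∧ Embeds S T₂ ∧ S.numLeaves = n}

end RTree

/-!
# Unrooted binary phylogenetic trees, via rooted representatives

An unrooted binary phylogenetic tree (all internal vertices of degree 3) with at least
two leaves is represented by any rooted binary tree obtained from it by subdividing an
edge and rooting there; conversely, suppressing the (degree-2) root of a rooted binary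
tree yields an unrooted one.  Two rooted trees represent the same unrooted tree (i.e.
the unrooted trees are isomorphic by a graph isomorphism fixing every leaf label) iff
they are related by the equivalence relation `URel` generated by moving the root across
an edge together with (unordered) rooted isomorphism.
-/

namespace RTree

variable {L : Type}

/-- Rooted isomorphism of rooted binary trees, fixing all leaf labels (the two children
of a vertex are unordered). -/
inductive RIso : RTree L → RTree L → Prop
  | leaf (b : L) : RIso (RTree.leaf b) (RTree.leaf b)
  | pair {a b c d : RTree L} :
      RIso a c → RIso b d → RIso (RTree.node a b) (RTree.node c d)
  | pair_swap {a b c d : RTree L} :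
      RIso a d → RIso b c → RIso (RTree.node a b) (RTree.node c d)

/-- Moving the root of a rooted binary tree across one edge of the underlying unrooted
tree: this does not change the unrooted tree obtained by suppressing the root. -/
inductive RootMove : RTree L → RTree L → Prop
  | assoc (a b c : RTree L) :
      RootMove (RTree.node a (RTree.node b c)) (RTree.node (RTree.node a b) c)

/-- `URel S T` holds iff the unrooted binary trees obtained from `S` and `T` by
suppressing their roots are isomorphic by a graph isomorphism fixing every leaf label. -/
def URel (S T : RTree L) : Prop :=
  Relation.EqvGen (fun X Y => RootMove X Y ∨ RIso X Y) S T

/-- `umast T₁ T₂` is the maximum agreement subtree size of the *unrooted* binary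
phylogenetic trees represented by `T₁` and `T₂`: the maximum cardinality of a set
`X ⊆ L(T₁) ∩ L(T₂)` such that the unrooted restrictions `T₁|X` and `T₂|X` are
isomorphic (fixing leaf labels).  Equivalently, the maximum number of leaves of a
common unrooted subtree, given here by a pair of rooted representatives. -/
noncomputable def umast (T₁ T₂ : RTree L) : ℕ :=
  sSup {n | ∃ S₁ S₂ : RTree L, S₁.IsPhylo ∧ S₂.IsPhylo ∧
    Embeds S₁ T₁ ∧ Embeds S₂ T₂ ∧ URel S₁ S₂ ∧ S₁.numLeaves = n}

end RTree

namespace RTree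

variable {L : Type}

/-- An unrooted binary phylogenetic tree is in class `𝓑ₘ` if its center is a pair of
adjacent vertices and all leaves are at distance `m` from the center (it then has `2^m`
leaves).  Equivalently: rerooting it at its central edge yields a rooted tree whose two
subtrees are balanced of height `m - 1`. -/
def ClassB (m : ℕ) (T : RTree L) : Prop :=
  ∃ l r : RTree L, URel (RTree.node l r) T ∧
    l.IsBalanced ∧ r.IsBalanced ∧ l.height + 1 = m ∧ r.height + 1 = m

/-- An unrooted binary phylogenetic tree is in class `𝓒ₘ` if its center is a single
vertex and all leaves are at distance `m` from the center (it then has `3·2^(m-1)`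
leaves).  Equivalently: rerooting it at an edge incident to the center yields
`node a (node b c)` where the three branches `a`, `b`, `c` at the center are balanced
of height `m - 1`. -/
def ClassC (m : ℕ) (T : RTree L) : Prop :=
  ∃ a b c : RTree L, URel (RTree.node a (RTree.node b c)) T ∧
    a.IsBalanced ∧ b.IsBalanced ∧ c.IsBalanced ∧
    a.height + 1 = m ∧ b.height + 1 = m ∧ c.height + 1 = m

/-- An unrooted phylogenetic tree is balanced if all leaves are at the same distance
from its center: it is a single vertex, or lies in some class `𝓑ₘ` or `𝓒ₘ`. -/
def UBalanced (T : RTree L) : Prop :=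
  (∃ b : L, T = RTree.leaf b) ∨ ∃ m : ℕ, ClassB m T ∨ ClassC m T

end RTree

namespace RTree

variable {L : Type}



@[simp] lemma leafList_leaf (b : L) : (leaf b : RTree L).leafList = [b] := rfl
@[simp] lemma leafList_node (l r : RTree L) :
    (node l r).leafList = l.leafList ++ r.leafList := rfl
@[simp] lemma numLeaves_leaf (b : L) : (leaf b : RTree L).numLeaves = 1 := rfl
lemma numLeaves_node (l r : RTree L) :
    (node l r).numLeaves = l.numLeaves + r.numLeaves := by
  simp [numLeaves]

lemma numLeaves_pos (S : RTree L) : 0 < S.numLeaves := by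
  induction S with
  | leaf b => simp
  | node l r ihl ihr => rw [numLeaves_node]; omega

lemma embeds_leaf {x : L} : ∀ {T : RTree L}, x ∈ T.leafList → Embeds (leaf x) T := by
  intro T
  induction T with
  | leaf b => intro h; simp at h; subst h; exact Embeds.leaf x
  | node l r ihl ihr =>
    intro h
    rcases List.mem_append.mp h with h | h
    · exact Embeds.left (ihl h)
    · exact Embeds.right (ihr h)

lemma embeds_cherry {x y : L} : ∀ {T : RTree L}, x ∈ T.leafList → y ∈ T.leafList →
    x ≠ y → Embeds (node (leaf x) (leaf y)) T := by
  intro T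
  induction T with
  | leaf b =>
    intro hx hy hxy
    simp at hx hy
    exact absurd (hx.trans hy.symm) hxy
  | node l r ihl ihr =>
    intro hx hy hxy
    rcases List.mem_append.mp hx with hx | hx <;> rcases List.mem_append.mp hy with hy | hy
    · exact Embeds.left (ihl hx hy hxy)
    · exact Embeds.pair (embeds_leaf hx) (embeds_leaf hy)
    · exact Embeds.pair_swap (embeds_leaf hx) (embeds_leaf hy)
    · exact Embeds.right (ihr hx hy hxy)

lemma Embeds.subset {S T : RTree L} (h : Embeds S T) : S.leafList ⊆ T.leafList := by
  induction h with
  | leaf b => exact fun a ha => ha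
  | left _ ih => exact fun a ha => List.mem_append.mpr (Or.inl (ih ha))
  | right _ ih => exact fun a ha => List.mem_append.mpr (Or.inr (ih ha))
  | pair _ _ ih₁ ih₂ =>
    intro a ha
    rcases List.mem_append.mp ha with h | h
    · exact List.mem_append.mpr (Or.inl (ih₁ h))
    · exact List.mem_append.mpr (Or.inr (ih₂ h))
  | pair_swap _ _ ih₁ ih₂ =>
    intro a ha
    rcases List.mem_append.mp ha with h | h
    · exact List.mem_append.mpr (Or.inr (ih₁ h))
    · exact List.mem_append.mpr (Or.inl (ih₂ h))

lemma numLeaves_le_of_embeds {S T : RTree L} (hS : S.IsPhylo) (h : Embeds S T) :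
    S.numLeaves ≤ T.numLeaves :=
  (List.subperm_of_subset hS h.subset).length_le

lemma IsBalanced.numLeaves_eq : ∀ {B : RTree L}, B.IsBalanced → B.numLeaves = 2 ^ B.height := by
  intro B
  induction B with
  | leaf b => intro _; simp [height]
  | node l r ihl ihr =>
    rintro ⟨hl, hr, hlr⟩
    rw [numLeaves_node, ihl hl, ihr hr, hlr, show (node l r).height = r.height + 1 by
      simp [height, hlr]]
    ring



lemma riso_refl (X : RTree L) : RIso X X := by
  induction X with
  | leaf b => exact RIso.leaf b
  | node l r ihl ihr => exact RIso.pair ihl ihr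

lemma RIso.symm {X Y : RTree L} (h : RIso X Y) : RIso Y X := by
  induction h with
  | leaf b => exact RIso.leaf b
  | pair _ _ ih₁ ih₂ => exact RIso.pair ih₁ ih₂
  | pair_swap _ _ ih₁ ih₂ => exact RIso.pair_swap ih₂ ih₁

lemma RIso.permList {X Y : RTree L} (h : RIso X Y) : X.leafList.Perm Y.leafList := by
  induction h with
  | leaf b => exact List.Perm.refl _
  | pair _ _ ih₁ ih₂ => simpa using ih₁.append ih₂
  | pair_swap _ _ ih₁ ih₂ =>
    simp only [leafList_node]
    exact (ih₁.append ih₂).trans List.perm_append_comm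

lemma embeds_riso {X Y : RTree L} (hIso : RIso X Y) :
    ∀ {S : RTree L}, Embeds S X → Embeds S Y := by
  induction hIso with
  | leaf b => intro S hS; exact hS
  | pair h₁ h₂ ih₁ ih₂ =>
    intro S hS
    cases hS with
    | left h => exact Embeds.left (ih₁ h)
    | right h => exact Embeds.right (ih₂ h)
    | pair g₁ g₂ => exact Embeds.pair (ih₁ g₁) (ih₂ g₂)
    | pair_swap g₁ g₂ => exact Embeds.pair_swap (ih₂ g₁) (ih₁ g₂)
  | pair_swap h₁ h₂ ih₁ ih₂ =>
    intro S hS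
    cases hS with
    | left h => exact Embeds.right (ih₁ h)
    | right h => exact Embeds.left (ih₂ h)
    | pair g₁ g₂ => exact Embeds.pair_swap (ih₁ g₁) (ih₂ g₂)
    | pair_swap g₁ g₂ => exact Embeds.pair (ih₂ g₁) (ih₁ g₂)

lemma urel_refl (X : RTree L) : URel X X := Relation.EqvGen.refl X

lemma URel.symm {X Y : RTree L} (h : URel X Y) : URel Y X := Relation.EqvGen.symm _ _ h

lemma URel.trans {X Y Z : RTree L} (h₁ : URel X Y) (h₂ : URel Y Z) : URel X Z :=
  Relation.EqvGen.trans _ _ _ h₁ h₂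

lemma URel.permList {X Y : RTree L} (h : URel X Y) : X.leafList.Perm Y.leafList := by
  induction h with
  | rel x y hr =>
    rcases hr with hr | hr
    · cases hr with
      | assoc a b c =>
        simp only [leafList_node, List.append_assoc]
        exact List.Perm.refl _
    · exact hr.permList
  | refl x => exact List.Perm.refl _
  | symm _ _ _ ih => exact ih.symm
  | trans _ _ _ _ _ ih₁ ih₂ => exact ih₁.trans ih₂

lemma rootmove_fwd {S a b c : RTree L} (h : Embeds S (node a (node b c))) :
    ∃ S', URel S S' ∧ Embeds S' (node (node a b) c) := by
  cases h with
  | left h => exact ⟨_, urel_refl _, Embeds.left (Embeds.left h)⟩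
  | right h =>
    cases h with
    | left h => exact ⟨_, urel_refl _, Embeds.left (Embeds.right h)⟩
    | right h => exact ⟨_, urel_refl _, Embeds.right h⟩
    | pair h₁ h₂ => exact ⟨_, urel_refl _, Embeds.pair (Embeds.right h₁) h₂⟩
    | pair_swap h₁ h₂ => exact ⟨_, urel_refl _, Embeds.pair_swap h₁ (Embeds.right h₂)⟩
  | pair h₁ h₂ =>
    cases h₂ with
    | left g => exact ⟨_, urel_refl _, Embeds.left (Embeds.pair h₁ g)⟩
    | right g => exact ⟨_, urel_refl _, Embeds.pair (Embeds.left h₁) g⟩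
    | pair g₁ g₂ =>
      exact ⟨_, Relation.EqvGen.rel _ _ (Or.inl (RootMove.assoc _ _ _)),
        Embeds.pair (Embeds.pair h₁ g₁) g₂⟩
    | pair_swap g₁ g₂ =>
      exact ⟨_, Relation.EqvGen.trans _ _ _
        (Relation.EqvGen.rel _ _ (Or.inr
          (RIso.pair (riso_refl _) (RIso.pair_swap (riso_refl _) (riso_refl _)))))
        (Relation.EqvGen.rel _ _ (Or.inl (RootMove.assoc _ _ _))),
        Embeds.pair (Embeds.pair h₁ g₂) g₁⟩
  | pair_swap h₁ h₂ =>
    cases h₁ with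
    | left g => exact ⟨_, urel_refl _, Embeds.left (Embeds.pair_swap g h₂)⟩
    | right g => exact ⟨_, urel_refl _, Embeds.pair_swap g (Embeds.left h₂)⟩
    | pair g₁ g₂ =>
      exact ⟨_, Relation.EqvGen.trans _ _ _
        (Relation.EqvGen.rel _ _ (Or.inr
          (RIso.pair_swap (riso_refl _) (riso_refl _))))
        (Relation.EqvGen.rel _ _ (Or.inl (RootMove.assoc _ _ _))),
        Embeds.pair (Embeds.pair h₂ g₁) g₂⟩
    | pair_swap g₁ g₂ =>
      exact ⟨_, Relation.EqvGen.trans _ _ _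
        (Relation.EqvGen.rel _ _ (Or.inr
          (RIso.pair_swap (RIso.pair_swap (riso_refl _) (riso_refl _)) (riso_refl _))))
        (Relation.EqvGen.rel _ _ (Or.inl (RootMove.assoc _ _ _))),
        Embeds.pair (Embeds.pair h₂ g₂) g₁⟩

lemma rootmove_bwd {S a b c : RTree L} (h : Embeds S (node (node a b) c)) :
    ∃ S', URel S S' ∧ Embeds S' (node a (node b c)) := by
  cases h with
  | left h =>
    cases h with
    | left h => exact ⟨_, urel_refl _, Embeds.left h⟩
    | right h => exact ⟨_, urel_refl _, Embeds.right (Embeds.left h)⟩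
    | pair h₁ h₂ => exact ⟨_, urel_refl _, Embeds.pair h₁ (Embeds.left h₂)⟩
    | pair_swap h₁ h₂ => exact ⟨_, urel_refl _, Embeds.pair_swap (Embeds.left h₁) h₂⟩
  | right h => exact ⟨_, urel_refl _, Embeds.right (Embeds.right h)⟩
  | pair h₁ h₂ =>
    cases h₁ with
    | left g => exact ⟨_, urel_refl _, Embeds.pair g (Embeds.right h₂)⟩
    | right g => exact ⟨_, urel_refl _, Embeds.right (Embeds.pair g h₂)⟩
    | pair g₁ g₂ =>
      exact ⟨_, Relation.EqvGen.symm _ _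
        (Relation.EqvGen.rel _ _ (Or.inl (RootMove.assoc _ _ _))),
        Embeds.pair g₁ (Embeds.pair g₂ h₂)⟩
    | pair_swap g₁ g₂ =>
      exact ⟨_, Relation.EqvGen.trans _ _ _
        (Relation.EqvGen.rel _ _ (Or.inr
          (RIso.pair (RIso.pair_swap (riso_refl _) (riso_refl _)) (riso_refl _))))
        (Relation.EqvGen.symm _ _
          (Relation.EqvGen.rel _ _ (Or.inl (RootMove.assoc _ _ _)))),
        Embeds.pair g₂ (Embeds.pair g₁ h₂)⟩
  | pair_swap h₁ h₂ =>
    cases h₂ with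
    | left g => exact ⟨_, urel_refl _, Embeds.pair_swap (Embeds.right h₁) g⟩
    | right g => exact ⟨_, urel_refl _, Embeds.right (Embeds.pair_swap h₁ g)⟩
    | pair g₁ g₂ =>
      exact ⟨_, Relation.EqvGen.trans _ _ _
        (Relation.EqvGen.rel _ _ (Or.inr
          (RIso.pair_swap (riso_refl _) (riso_refl _))))
        (Relation.EqvGen.symm _ _
          (Relation.EqvGen.rel _ _ (Or.inl (RootMove.assoc _ _ _)))),
        Embeds.pair g₁ (Embeds.pair g₂ h₁)⟩
    | pair_swap g₁ g₂ =>
      exact ⟨_, Relation.EqvGen.trans _ _ _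
        (Relation.EqvGen.rel _ _ (Or.inr
          (RIso.pair_swap (riso_refl _) (RIso.pair_swap (riso_refl _) (riso_refl _)))))
        (Relation.EqvGen.symm _ _
          (Relation.EqvGen.rel _ _ (Or.inl (RootMove.assoc _ _ _)))),
        Embeds.pair g₂ (Embeds.pair g₁ h₁)⟩

lemma urel_embeds_transfer {X Y : RTree L} (h : URel X Y) :
    (∀ S, Embeds S X → ∃ S', URel S S' ∧ Embeds S' Y) ∧
    (∀ S, Embeds S Y → ∃ S', URel S S' ∧ Embeds S' X) := by
  induction h with
  | rel x y hr =>
    rcases hr with hr | hr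
    · cases hr with
      | assoc a b c =>
        exact ⟨fun S hS => rootmove_fwd hS, fun S hS => rootmove_bwd hS⟩
    · exact ⟨fun S hS => ⟨S, urel_refl S, embeds_riso hr hS⟩,
        fun S hS => ⟨S, urel_refl S, embeds_riso hr.symm hS⟩⟩
  | refl x => exact ⟨fun S hS => ⟨S, urel_refl S, hS⟩, fun S hS => ⟨S, urel_refl S, hS⟩⟩
  | symm _ _ _ ih => exact ⟨ih.2, ih.1⟩
  | trans _ _ _ _ _ ih₁ ih₂ =>
    constructor
    · intro S hS
      obtain ⟨S', h1, h2⟩ := ih₁.1 S hS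
      obtain ⟨S'', h3, h4⟩ := ih₂.1 S' h2
      exact ⟨S'', h1.trans h3, h4⟩
    · intro S hS
      obtain ⟨S', h1, h2⟩ := ih₂.2 S hS
      obtain ⟨S'', h3, h4⟩ := ih₁.2 S' h2
      exact ⟨S'', h1.trans h3, h4⟩



open Classical in
/-- The number of common leaf labels (counted in `B`). -/
noncomputable def common (B T : RTree L) : ℕ :=
  (B.leafList.filter (fun y => y ∈ T.leafList)).length

lemma common_le (B T : RTree L) : common B T ≤ B.numLeaves := by
  classical
  unfold common numLeaves
  exact List.length_filter_le _ _

lemma exists_common {B T : RTree L} (h : 1 ≤ common B T) :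
    ∃ y, y ∈ B.leafList ∧ y ∈ T.leafList := by
  classical
  unfold common at h
  have hne : (B.leafList.filter (fun y => y ∈ T.leafList)) ≠ [] := by
    intro hnil; rw [hnil] at h; simp at h
  obtain ⟨y, hy⟩ := List.exists_mem_of_ne_nil _ hne
  have := List.mem_filter.mp hy
  exact ⟨y, this.1, by simpa using this.2⟩

lemma exists_two_common {B T : RTree L} (hB : B.IsPhylo) (h : 2 ≤ common B T) :
    ∃ x y, x ≠ y ∧ x ∈ B.leafList ∧ x ∈ T.leafList ∧ y ∈ B.leafList ∧ y ∈ T.leafList := by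
  classical
  unfold common at h
  set F := B.leafList.filter (fun y => y ∈ T.leafList) with hF
  have hnd : F.Nodup := hB.filter _
  rcases hFe : F with _ | ⟨x, _ | ⟨y, F'⟩⟩
  · rw [hFe] at h; simp at h
  · rw [hFe] at h; simp at h
  · have hx : x ∈ F := by rw [hFe]; exact List.mem_cons_self
    have hy : y ∈ F := by rw [hFe]; exact List.mem_cons_of_mem _ (List.mem_cons_self)
    have hx' := List.mem_filter.mp (hF ▸ hx)
    have hy' := List.mem_filter.mp (hF ▸ hy)
    have hxy : x ≠ y := by
      rw [hFe] at hnd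
      exact fun he => (List.nodup_cons.mp hnd).1 (he ▸ List.mem_cons_self)
    exact ⟨x, y, hxy, hx'.1, by simpa using hx'.2, hy'.1, by simpa using hy'.2⟩

lemma common_eq_numLeaves {B T : RTree L} (h : ∀ y ∈ B.leafList, y ∈ T.leafList) :
    common B T = B.numLeaves := by
  classical
  unfold common numLeaves
  rw [List.filter_eq_self.mpr (fun a ha => by simpa using h a ha)]

lemma common_leaf_le {B : RTree L} (hB : B.IsPhylo) (x : L) : common B (leaf x) ≤ 1 := by
  classical
  unfold common
  by_contra hcon
  push_neg at hcon
  set F := B.leafList.filter (fun y => y ∈ (leaf x : RTree L).leafList) with hF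
  have hnd : F.Nodup := hB.filter _
  rcases hFe : F with _ | ⟨a, _ | ⟨b, F'⟩⟩
  · rw [hFe] at hcon; simp at hcon
  · rw [hFe] at hcon; simp at hcon
  · have ha : a ∈ F := by rw [hFe]; exact List.mem_cons_self
    have hb : b ∈ F := by rw [hFe]; exact List.mem_cons_of_mem _ (List.mem_cons_self)
    have ha' := List.mem_filter.mp (hF ▸ ha)
    have hb' := List.mem_filter.mp (hF ▸ hb)
    have hax : a = x := by simpa using ha'.2
    have hbx : b = x := by simpa using hb'.2
    rw [hFe] at hnd
    exact (List.nodup_cons.mp hnd).1 ((hax.trans hbx.symm) ▸ List.mem_cons_self)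

lemma common_node_left (B₁ B₂ T : RTree L) :
    common (node B₁ B₂) T = common B₁ T + common B₂ T := by
  classical
  unfold common
  rw [leafList_node, List.filter_append, List.length_append]

lemma common_node_right (B : RTree L) {T₁ T₂ : RTree L} (hT : (node T₁ T₂).IsPhylo) :
    common B (node T₁ T₂) = common B T₁ + common B T₂ := by
  classical
  have hdisj : T₁.leafList.Disjoint T₂.leafList := by
    have := hT
    unfold IsPhylo at this
    rw [leafList_node, List.nodup_append] at this
    exact fun a ha hb => this.2.2 a ha a hb rfl
  unfold common
  simp only [leafList_node]
  simp only [List.mem_append]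

  induction B.leafList with
  | nil => simp
  | cons x xs ih =>
    by_cases h₁ : x ∈ T₁.leafList <;> by_cases h₂ : x ∈ T₂.leafList
    · exact absurd h₂ (hdisj h₁)
    all_goals simp [List.filter_cons, h₁, h₂] at ih ⊢ <;> omega

lemma common_perm_right {B T T' : RTree L} (h : T.leafList.Perm T'.leafList) :
    common B T = common B T' := by
  classical
  unfold common
  congr 1
  apply List.filter_congr
  intro y _
  simp [h.mem_iff]



lemma logb_two_eq_one : Real.logb 2 2 = 1 := Real.logb_self_eq_one one_lt_two

lemma logb_sq_le {k r : ℕ} (hr : 1 ≤ r) (h : k^2 ≤ 2*r^2) (hk : 1 ≤ k) :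
    Real.logb 2 (k : ℝ) ≤ Real.logb 2 (r : ℝ) + 1/2 := by
  have hkR : (0:ℝ) < (k:ℝ) := by exact_mod_cast hk
  have hrR : (0:ℝ) < (r:ℝ) := by exact_mod_cast hr
  have h' : ((k:ℝ))^2 ≤ 2*((r:ℝ))^2 := by exact_mod_cast h
  have h2 : Real.logb 2 ((k:ℝ)^2) ≤ Real.logb 2 (2*(r:ℝ)^2) :=
    Real.logb_le_logb_of_le one_lt_two (by positivity) h'
  rw [Real.logb_pow, Real.logb_mul (by norm_num) (by positivity), Real.logb_pow,
    logb_two_eq_one] at h2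
  push_cast at h2
  linarith

lemma logb_4mul_le {k e : ℕ} (he : 1 ≤ e) (h : k ≤ 4*e) (hk : 1 ≤ k) :
    Real.logb 2 (k : ℝ) ≤ Real.logb 2 (e : ℝ) + 2 := by
  have hkR : (0:ℝ) < (k:ℝ) := by exact_mod_cast hk
  have heR : (0:ℝ) < (e:ℝ) := by exact_mod_cast he
  have h' : (k:ℝ) ≤ 4*(e:ℝ) := by exact_mod_cast h
  have h2 : Real.logb 2 (k:ℝ) ≤ Real.logb 2 (4*(e:ℝ)) :=
    Real.logb_le_logb_of_le one_lt_two hkR h'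
  have h4 : Real.logb 2 (4:ℝ) = 2 := by
    rw [show (4:ℝ) = 2^(2:ℕ) by norm_num, Real.logb_pow, logb_two_eq_one]
    norm_num
  rw [Real.logb_mul (by norm_num) (by positivity), h4] at h2
  linarith

lemma logb_pow_two (m : ℕ) : Real.logb 2 ((2:ℝ)^m) = m := by
  rw [Real.logb_pow, logb_two_eq_one, mul_one]

lemma alpha_bounds {δ : ℝ} (h1 : 0 < δ) (h2 : δ < 1/2) :
    0 ≤ (1 + Real.logb 2 (1 - δ)) / (1 - Real.logb 2 δ) ∧
    (1 + Real.logb 2 (1 - δ)) / (1 - Real.logb 2 δ) ≤ 1/3 := by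
  have hb : (1:ℝ) < 2 := one_lt_two
  have hδ1 : δ < 1 := by linarith
  have hlogδ : Real.logb 2 δ < 0 := Real.logb_neg hb h1 hδ1
  have hden : 0 < 1 - Real.logb 2 δ := by linarith
  have h1δpos : (0:ℝ) < 1 - δ := by linarith
  have hnum : -1 ≤ Real.logb 2 (1 - δ) := by
    have hm : Real.logb 2 (1/2 : ℝ) ≤ Real.logb 2 (1 - δ) :=
      Real.logb_le_logb_of_le hb (by norm_num) (by linarith)
    have h12 : Real.logb 2 (1/2 : ℝ) = -1 := by
      rw [show (1/2 : ℝ) = 2⁻¹ by norm_num, Real.logb_inv, logb_two_eq_one]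
    linarith
  constructor
  · exact div_nonneg (by linarith) hden.le
  · rw [div_le_iff₀ hden]
    have key : Real.logb 2 δ + 3 * Real.logb 2 (1-δ) ≤ -2 := by
      have hab : δ * (1-δ) ≤ 1/4 := by nlinarith [sq_nonneg (δ - 1/2)]
      have hc : (1-δ)^3 ≤ (1-δ) := by nlinarith [sq_nonneg (1-δ), sq_nonneg δ]
      have hpoly : δ * (1-δ)^3 ≤ 1/4 :=
        le_trans (by nlinarith) hab
      have hpos : (0:ℝ) < δ * (1-δ)^3 := by positivity
      have hlog : Real.logb 2 (δ*(1-δ)^3) ≤ Real.logb 2 (1/4 : ℝ) :=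
        Real.logb_le_logb_of_le hb hpos (by linarith)
      have h14 : Real.logb 2 (1/4 : ℝ) = -2 := by
        rw [show (1/4:ℝ) = ((2:ℝ)^(2:ℕ))⁻¹ by norm_num, Real.logb_inv, Real.logb_pow,
          logb_two_eq_one]
        norm_num
      rw [Real.logb_mul (ne_of_gt h1) (by positivity), Real.logb_pow, h14] at hlog
      push_cast at hlog
      linarith
    linarith


lemma main_aux : ∀ N : ℕ, ∀ B T : RTree L, B.numLeaves + T.numLeaves ≤ N →
    B.IsBalanced → B.IsPhylo → T.IsPhylo → 1 ≤ common B T →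
    ∃ S : RTree L, S.IsPhylo ∧ Embeds S B ∧ Embeds S T ∧
      (2:ℝ)/3 * Real.logb 2 (common B T : ℝ) - (B.height : ℝ)/3 + 1 ≤ (S.numLeaves : ℝ) := by
  intro N
  induction N with
  | zero =>
    intro B T hm
    have h1 := numLeaves_pos B
    have h2 := numLeaves_pos T
    omega
  | succ N ih =>
    intro B T hm hbal hpB hpT hk1
    by_cases hA1 : (2:ℝ)/3 * Real.logb 2 (common B T : ℝ) - (B.height : ℝ)/3 + 1 ≤ 1
    · obtain ⟨y, hyB, hyT⟩ := exists_common hk1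
      refine ⟨leaf y, by simp [IsPhylo], embeds_leaf hyB, embeds_leaf hyT, ?_⟩
      simpa using hA1
    push_neg at hA1
    have hk2 : 2 ≤ common B T := by
      by_contra hcon
      have hco : common B T = 1 := by omega
      rw [hco] at hA1
      have h0 : (0:ℝ) ≤ (B.height : ℝ) := Nat.cast_nonneg _
      push_cast at hA1
      rw [Real.logb_one] at hA1
      linarith
    by_cases hA2 : (2:ℝ)/3 * Real.logb 2 (common B T : ℝ) - (B.height : ℝ)/3 + 1 ≤ 2
    · obtain ⟨x, y, hxy, hxB, hxT, hyB, hyT⟩ := exists_two_common hpB hk2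
      refine ⟨node (leaf x) (leaf y), by simp [IsPhylo, hxy],
        embeds_cherry hxB hyB hxy, embeds_cherry hxT hyT hxy, ?_⟩
      have h2 : (node (leaf x) (leaf y)).numLeaves = 2 := rfl
      rw [h2]
      push_cast
      linarith
    push_neg at hA2
    cases B with
    | leaf b0 =>
      exfalso
      have h1 := common_le (leaf b0) T
      simp at h1
      omega
    | node B₁ B₂ =>
      cases T with
      | leaf t0 =>
        exfalso
        have h1 := common_leaf_le hpB t0
        omega
      | node T₁ T₂ =>
        obtain ⟨hb₁, hb₂, hbeq⟩ := hbal
        have hbal' : (node B₁ B₂).IsBalanced := ⟨hb₁, hb₂, hbeq⟩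
        have hBnd := hpB
        unfold IsPhylo at hBnd
        rw [leafList_node, List.nodup_append] at hBnd
        obtain ⟨hpB₁, hpB₂, hdisjB⟩ := hBnd
        have hTnd := hpT
        unfold IsPhylo at hTnd
        rw [leafList_node, List.nodup_append] at hTnd
        obtain ⟨hpT₁, hpT₂, hdisjT⟩ := hTnd
        set a := common B₁ T₁ with ha
        set b := common B₁ T₂ with hb
        set c := common B₂ T₁ with hc
        set d := common B₂ T₂ with hd
        have hrow1 : common B₁ (node T₁ T₂) = a + b := common_node_right B₁ hpT
        have hrow2 : common B₂ (node T₁ T₂) = c + d := common_node_right B₂ hpT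
        have hcol1 : common (node B₁ B₂) T₁ = a + c := common_node_left B₁ B₂ T₁
        have hcol2 : common (node B₁ B₂) T₂ = b + d := common_node_left B₁ B₂ T₂
        have hksplit : common (node B₁ B₂) (node T₁ T₂) = a + b + (c + d) := by
          rw [common_node_left B₁ B₂ (node T₁ T₂), hrow1, hrow2]
        set k := common (node B₁ B₂) (node T₁ T₂) with hk
        have hmB : (node B₁ B₂).numLeaves = B₁.numLeaves + B₂.numLeaves := numLeaves_node _ _
        have hmT : (node T₁ T₂).numLeaves = T₁.numLeaves + T₂.numLeaves := numLeaves_node _ _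
        have hposB₁ := numLeaves_pos B₁
        have hposB₂ := numLeaves_pos B₂
        have hposT₁ := numLeaves_pos T₁
        have hposT₂ := numLeaves_pos T₂
        have hH : ((node B₁ B₂).height : ℝ) = (B₁.height : ℝ) + 1 := by
          have : (node B₁ B₂).height = B₁.height + 1 := by simp [height]; omega
          rw [this]; push_cast; ring
        have hH₂ : ((node B₁ B₂).height : ℝ) = (B₂.height : ℝ) + 1 := by
          have : (node B₁ B₂).height = B₂.height + 1 := by simp [height]; omega
          rw [this]; push_cast; ring
        -- row descents
        have hRow1 : k^2 ≤ 2*(a+b)^2 →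
            ∃ S : RTree L, S.IsPhylo ∧ Embeds S (node B₁ B₂) ∧ Embeds S (node T₁ T₂) ∧
              (2:ℝ)/3 * Real.logb 2 (k : ℝ) - ((node B₁ B₂).height : ℝ)/3 + 1
                ≤ (S.numLeaves : ℝ) := by
          intro hsq
          have hab1 : 1 ≤ a + b := by
            by_contra hcon
            have h0 : a + b = 0 := by omega
            rw [h0] at hsq
            have hkk : 0 < k ^ 2 := pow_pos (by omega) 2
            simp at hsq
            omega
          obtain ⟨S, hSp, hSB, hST, hSn⟩ := ih B₁ (node T₁ T₂) (by omega) hb₁ hpB₁ hpT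
            (by rw [hrow1]; omega)
          rw [hrow1] at hSn
          have hlg := logb_sq_le hab1 hsq hk1
          refine ⟨S, hSp, Embeds.left hSB, hST, ?_⟩
          rw [hH]
          push_cast at hSn hlg ⊢
          linarith
        have hRow2 : k^2 ≤ 2*(c+d)^2 →
            ∃ S : RTree L, S.IsPhylo ∧ Embeds S (node B₁ B₂) ∧ Embeds S (node T₁ T₂) ∧
              (2:ℝ)/3 * Real.logb 2 (k : ℝ) - ((node B₁ B₂).height : ℝ)/3 + 1
                ≤ (S.numLeaves : ℝ) := by
          intro hsq
          have hcd1 : 1 ≤ c + d := by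
            by_contra hcon
            have h0 : c + d = 0 := by omega
            rw [h0] at hsq
            have hkk : 0 < k ^ 2 := pow_pos (by omega) 2
            simp at hsq
            omega
          obtain ⟨S, hSp, hSB, hST, hSn⟩ := ih B₂ (node T₁ T₂) (by omega) hb₂ hpB₂ hpT
            (by rw [hrow2]; omega)
          rw [hrow2] at hSn
          have hlg := logb_sq_le hcd1 hsq hk1
          refine ⟨S, hSp, Embeds.right hSB, hST, ?_⟩
          rw [hH₂]
          push_cast at hSn hlg ⊢
          linarith
        -- combine cases
        have hC11 : k ≤ 4*a → 1 ≤ d →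
            ∃ S : RTree L, S.IsPhylo ∧ Embeds S (node B₁ B₂) ∧ Embeds S (node T₁ T₂) ∧
              (2:ℝ)/3 * Real.logb 2 (k : ℝ) - ((node B₁ B₂).height : ℝ)/3 + 1
                ≤ (S.numLeaves : ℝ) := by
          intro hka hd1
          have ha1 : 1 ≤ a := by omega
          obtain ⟨S₁, hp1, hE1B, hE1T, hn1⟩ := ih B₁ T₁ (by omega) hb₁ hpB₁ hpT₁
            (ha ▸ ha1)
          rw [← ha] at hn1
          obtain ⟨y, hyB, hyT⟩ := exists_common (hd ▸ hd1)
          have hysub := hE1B.subset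
          have hynot : y ∉ S₁.leafList := fun hmem => hdisjB _ (hysub hmem) _ hyB rfl
          refine ⟨node S₁ (leaf y), ?_, Embeds.pair hE1B (embeds_leaf hyB),
            Embeds.pair hE1T (embeds_leaf hyT), ?_⟩
          · unfold IsPhylo
            rw [leafList_node, leafList_leaf]
            exact hp1.append (List.nodup_singleton y) (List.disjoint_singleton.mpr hynot)
          · have hnum : (node S₁ (leaf y)).numLeaves = S₁.numLeaves + 1 := by
              rw [numLeaves_node, numLeaves_leaf]
            have hlg := logb_4mul_le ha1 hka hk1
            rw [hnum, hH]
            push_cast at hn1 hlg ⊢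
            linarith
        have hC22 : k ≤ 4*d → 1 ≤ a →
            ∃ S : RTree L, S.IsPhylo ∧ Embeds S (node B₁ B₂) ∧ Embeds S (node T₁ T₂) ∧
              (2:ℝ)/3 * Real.logb 2 (k : ℝ) - ((node B₁ B₂).height : ℝ)/3 + 1
                ≤ (S.numLeaves : ℝ) := by
          intro hkd ha1
          have hd1 : 1 ≤ d := by omega
          obtain ⟨S₁, hp1, hE1B, hE1T, hn1⟩ := ih B₂ T₂ (by omega) hb₂ hpB₂ hpT₂
            (hd ▸ hd1)
          rw [← hd] at hn1
          obtain ⟨y, hyB, hyT⟩ := exists_common (ha ▸ ha1)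
          have hysub := hE1B.subset
          have hynot : y ∉ S₁.leafList := fun hmem => hdisjB _ hyB _ (hysub hmem) rfl
          refine ⟨node (leaf y) S₁, ?_, Embeds.pair (embeds_leaf hyB) hE1B,
            Embeds.pair (embeds_leaf hyT) hE1T, ?_⟩
          · unfold IsPhylo
            rw [leafList_node, leafList_leaf]
            exact (List.nodup_singleton y).append hp1
              (List.disjoint_singleton.mpr hynot).symm
          · have hnum : (node (leaf y) S₁).numLeaves = 1 + S₁.numLeaves := by
              rw [numLeaves_node, numLeaves_leaf]
            have hlg := logb_4mul_le hd1 hkd hk1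
            rw [hnum, hH₂]
            push_cast at hn1 hlg ⊢
            linarith
        have hC12 : k ≤ 4*b → 1 ≤ c →
            ∃ S : RTree L, S.IsPhylo ∧ Embeds S (node B₁ B₂) ∧ Embeds S (node T₁ T₂) ∧
              (2:ℝ)/3 * Real.logb 2 (k : ℝ) - ((node B₁ B₂).height : ℝ)/3 + 1
                ≤ (S.numLeaves : ℝ) := by
          intro hkb hc1
          have hb1 : 1 ≤ b := by omega
          obtain ⟨S₁, hp1, hE1B, hE1T, hn1⟩ := ih B₁ T₂ (by omega) hb₁ hpB₁ hpT₂
            (hb ▸ hb1)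
          rw [← hb] at hn1
          obtain ⟨y, hyB, hyT⟩ := exists_common (hc ▸ hc1)
          have hysub := hE1B.subset
          have hynot : y ∉ S₁.leafList := fun hmem => hdisjB _ (hysub hmem) _ hyB rfl
          refine ⟨node S₁ (leaf y), ?_, Embeds.pair hE1B (embeds_leaf hyB),
            Embeds.pair_swap hE1T (embeds_leaf hyT), ?_⟩
          · unfold IsPhylo
            rw [leafList_node, leafList_leaf]
            exact hp1.append (List.nodup_singleton y) (List.disjoint_singleton.mpr hynot)
          · have hnum : (node S₁ (leaf y)).numLeaves = S₁.numLeaves + 1 := by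
              rw [numLeaves_node, numLeaves_leaf]
            have hlg := logb_4mul_le hb1 hkb hk1
            rw [hnum, hH]
            push_cast at hn1 hlg ⊢
            linarith
        have hC21 : k ≤ 4*c → 1 ≤ b →
            ∃ S : RTree L, S.IsPhylo ∧ Embeds S (node B₁ B₂) ∧ Embeds S (node T₁ T₂) ∧
              (2:ℝ)/3 * Real.logb 2 (k : ℝ) - ((node B₁ B₂).height : ℝ)/3 + 1
                ≤ (S.numLeaves : ℝ) := by
          intro hkc hb1
          have hc1 : 1 ≤ c := by omega
          obtain ⟨S₁, hp1, hE1B, hE1T, hn1⟩ := ih B₂ T₁ (by omega) hb₂ hpB₂ hpT₁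
            (hc ▸ hc1)
          rw [← hc] at hn1
          obtain ⟨y, hyB, hyT⟩ := exists_common (hb ▸ hb1)
          have hysub := hE1B.subset
          have hynot : y ∉ S₁.leafList := fun hmem => hdisjB _ hyB _ (hysub hmem) rfl
          refine ⟨node S₁ (leaf y), ?_, Embeds.pair_swap hE1B (embeds_leaf hyB),
            Embeds.pair hE1T (embeds_leaf hyT), ?_⟩
          · unfold IsPhylo
            rw [leafList_node, leafList_leaf]
            exact hp1.append (List.nodup_singleton y) (List.disjoint_singleton.mpr hynot)
          · have hnum : (node S₁ (leaf y)).numLeaves = S₁.numLeaves + 1 := by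
              rw [numLeaves_node, numLeaves_leaf]
            have hlg := logb_4mul_le hc1 hkc hk1
            rw [hnum, hH₂]
            push_cast at hn1 hlg ⊢
            linarith
        -- column descents
        have hCol1 : b = 0 → d = 0 →
            ∃ S : RTree L, S.IsPhylo ∧ Embeds S (node B₁ B₂) ∧ Embeds S (node T₁ T₂) ∧
              (2:ℝ)/3 * Real.logb 2 (k : ℝ) - ((node B₁ B₂).height : ℝ)/3 + 1
                ≤ (S.numLeaves : ℝ) := by
          intro hb0 hd0
          have hck : common (node B₁ B₂) T₁ = k := by rw [hcol1]; omega
          obtain ⟨S, hSp, hSB, hST, hSn⟩ := ih (node B₁ B₂) T₁ (by omega) hbal' hpB hpT₁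
            (by rw [hck]; exact hk1)
          rw [hck] at hSn
          exact ⟨S, hSp, hSB, Embeds.left hST, hSn⟩
        have hCol2 : a = 0 → c = 0 →
            ∃ S : RTree L, S.IsPhylo ∧ Embeds S (node B₁ B₂) ∧ Embeds S (node T₁ T₂) ∧
              (2:ℝ)/3 * Real.logb 2 (k : ℝ) - ((node B₁ B₂).height : ℝ)/3 + 1
                ≤ (S.numLeaves : ℝ) := by
          intro ha0 hc0
          have hck : common (node B₁ B₂) T₂ = k := by rw [hcol2]; omega
          obtain ⟨S, hSp, hSB, hST, hSn⟩ := ih (node B₁ B₂) T₂ (by omega) hbal' hpB hpT₂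
            (by rw [hck]; exact hk1)
          rw [hck] at hSn
          exact ⟨S, hSp, hSB, Embeds.right hST, hSn⟩
        -- decision tree
        by_cases hsq1 : k^2 ≤ 2*(a+b)^2
        · exact hRow1 hsq1
        by_cases hsq2 : k^2 ≤ 2*(c+d)^2
        · exact hRow2 hsq2
        push_neg at hsq1 hsq2
        have h41 : k ≤ 4*(a+b) := by
          by_contra hcon
          push_neg at hcon
          have h3k : 3*k ≤ 4*(c+d) := by omega
          have h9 : 9*k^2 ≤ 16*(c+d)^2 := by
            have hpw := Nat.pow_le_pow_left h3k 2
            ring_nf at hpw ⊢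
            linarith
          linarith [hsq2, h9, Nat.zero_le ((c+d)^2)]
        have h42 : k ≤ 4*(c+d) := by
          by_contra hcon
          push_neg at hcon
          have h3k : 3*k ≤ 4*(a+b) := by omega
          have h9 : 9*k^2 ≤ 16*(a+b)^2 := by
            have hpw := Nat.pow_le_pow_left h3k 2
            ring_nf at hpw ⊢
            linarith
          linarith [hsq1, h9, Nat.zero_le ((a+b)^2)]
        have hbig : k ≤ 4*a ∨ k ≤ 4*b ∨ k ≤ 4*c ∨ k ≤ 4*d := by omega
        rcases hbig with hBig | hBig | hBig | hBig
        · by_cases hd1 : 1 ≤ d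
          · exact hC11 hBig hd1
          · by_cases hb1 : 1 ≤ b
            · exact hC21 (by omega) hb1
            · exact hCol1 (by omega) (by omega)
        · by_cases hc1 : 1 ≤ c
          · exact hC12 hBig hc1
          · by_cases ha1 : 1 ≤ a
            · exact hC22 (by omega) ha1
            · exact hCol2 (by omega) (by omega)
        · by_cases hb1 : 1 ≤ b
          · exact hC21 hBig hb1
          · by_cases hd1 : 1 ≤ d
            · exact hC11 (by omega) hd1
            · exact hCol1 (by omega) (by omega)
        · by_cases ha1 : 1 ≤ a
          · exact hC22 hBig ha1
          · by_cases hc1 : 1 ≤ c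
            · exact hC12 (by omega) hc1
            · exact hCol2 (by omega) (by omega)



lemma le_umast {T₁ T₂ S₁ S₂ : RTree L} (hp₁ : S₁.IsPhylo) (hp₂ : S₂.IsPhylo)
    (hE₁ : Embeds S₁ T₁) (hE₂ : Embeds S₂ T₂) (hU : URel S₁ S₂) :
    S₁.numLeaves ≤ umast T₁ T₂ := by
  apply le_csSup
  · refine ⟨T₁.numLeaves, ?_⟩
    rintro n ⟨U₁, U₂, hU₁, _, hEU₁, _, _, rfl⟩
    exact numLeaves_le_of_embeds hU₁ hEU₁
  · exact ⟨S₁, S₂, hp₁, hp₂, hE₁, hE₂, hU, rfl⟩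


end RTree

/-- Let `δ ∈ (0,1/2)` and `α := (1 + log(1-δ))/(1 - log δ)`.  If `T₁`
is a balanced unrooted binary phylogenetic tree on `n` leaves and `T₂` is an arbitrary
unrooted binary phylogenetic tree on the same leaf set, then
`mast{T₁,T₂} ≥ α·log(2n/3)` (logarithms base 2). -/
theorem stmt_3 {L : Type} (δ : ℝ) (hδ : δ ∈ Set.Ioo (0 : ℝ) (1/2))
    (T₁ T₂ : RTree L) (n : ℕ)
    (h₁ : T₁.IsPhylo) (h₂ : T₂.IsPhylo) (hbal : RTree.UBalanced T₁)
    (hL : T₁.leafSet = T₂.leafSet) (hn : T₁.numLeaves = n) :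
    (1 + Real.logb 2 (1 - δ)) / (1 - Real.logb 2 δ) * Real.logb 2 (2 * (n : ℝ) / 3)
      ≤ (RTree.umast T₁ T₂ : ℝ) := by
  classical
  open RTree in
  obtain ⟨hδ1, hδ2⟩ := hδ
  obtain ⟨hα0, hα3⟩ := RTree.alpha_bounds hδ1 hδ2
  rcases hbal with ⟨b0, rfl⟩ | ⟨m, hcls⟩
  · -- T₁ is a single leaf : n = 1 and the RHS is nonpositive
    have hn1 : n = 1 := by simpa using hn.symm
    have hlog : Real.logb 2 (2 * (n:ℝ) / 3) ≤ 0 := by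
      rw [hn1]
      push_cast
      exact Real.logb_nonpos one_lt_two (by norm_num) (by norm_num)
    have hneg : (1 + Real.logb 2 (1-δ)) / (1 - Real.logb 2 δ) * Real.logb 2 (2*(n:ℝ)/3) ≤ 0 :=
      mul_nonpos_of_nonneg_of_nonpos hα0 hlog
    exact hneg.trans (by positivity)
  · obtain ⟨W, B₀, hUW, hlift, hbalB₀, hphyB₀, hhB₀, hcov, hm1, hlogn⟩ :
        ∃ W B₀ : RTree L, RTree.URel W T₁ ∧ (∀ S, RTree.Embeds S B₀ → RTree.Embeds S W) ∧
          B₀.IsBalanced ∧ B₀.IsPhylo ∧ B₀.height = m ∧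
          (∀ y ∈ B₀.leafList, y ∈ T₂.leafList) ∧ 1 ≤ m ∧
          Real.logb 2 (2 * (n:ℝ)/3) ≤ (m:ℝ) := by
      rcases hcls with ⟨l, r, hU, hbl, hbr, hlm, hrm⟩ | ⟨a, b, c, hU, hba, hbb, hbc, ham, hbm, hcm⟩
      · -- Class B
        have hWp : (RTree.node l r).IsPhylo := (hU.permList.nodup_iff).mpr h₁
        have hWT : (RTree.node l r).numLeaves = T₁.numLeaves := hU.permList.length_eq
        have hnl := hbl.numLeaves_eq
        have hnr := hbr.numLeaves_eq
        have hn2 : n = 2 ^ m := by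
          have hrl : r.height = l.height := by omega
          rw [← hn, ← hWT, RTree.numLeaves_node, hnl, hnr, hrl, ← hlm, pow_succ]
          ring
        refine ⟨RTree.node l r, RTree.node l r, hU, fun S hS => hS, ⟨hbl, hbr, by omega⟩,
          hWp, by simp [RTree.height]; omega, ?_, by omega, ?_⟩
        · intro y hy
          have hyT₁ : y ∈ T₁.leafList := (hU.permList.mem_iff).mp hy
          have h' : y ∈ T₁.leafSet := hyT₁
          rw [hL] at h'
          exact h'
        · have h3 : (1:ℝ) ≤ Real.logb 2 3 := by
            rw [← RTree.logb_two_eq_one]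
            exact Real.logb_le_logb_of_le one_lt_two (by norm_num) (by norm_num)
          have hcast : (n:ℝ) = 2^m := by rw [hn2]; push_cast; ring
          rw [hcast]
          have hx : 2*(2:ℝ)^m/3 = 2^(m+1)/3 := by rw [pow_succ]; ring
          rw [hx, Real.logb_div (by positivity) (by norm_num), RTree.logb_pow_two]
          push_cast
          linarith
      · -- Class C
        have hWp : (RTree.node a (RTree.node b c)).IsPhylo := (hU.permList.nodup_iff).mpr h₁
        have hWT : (RTree.node a (RTree.node b c)).numLeaves = T₁.numLeaves :=
          hU.permList.length_eq
        have hna := hba.numLeaves_eq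
        have hnb := hbb.numLeaves_eq
        have hnc := hbc.numLeaves_eq
        have hphyBC : (RTree.node b c).IsPhylo := by
          have hthis := hWp
          unfold RTree.IsPhylo at hthis
          rw [RTree.leafList_node, List.nodup_append] at hthis
          exact hthis.2.1
        have hn2 : n = 3 * 2 ^ b.height := by
          have h1' : a.height = b.height := by omega
          have h2' : c.height = b.height := by omega
          rw [← hn, ← hWT, RTree.numLeaves_node, RTree.numLeaves_node, hna, hnb, hnc, h1', h2']
          ring
        refine ⟨RTree.node a (RTree.node b c), RTree.node b c, hU,
          fun S hS => RTree.Embeds.right hS, ⟨hbb, hbc, by omega⟩,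
          hphyBC, by simp [RTree.height]; omega, ?_, by omega, ?_⟩
        · intro y hy
          have hyW : y ∈ (RTree.node a (RTree.node b c)).leafList := by
            rw [RTree.leafList_node]
            exact List.mem_append.mpr (Or.inr hy)
          have hyT₁ : y ∈ T₁.leafList := (hU.permList.mem_iff).mp hyW
          have h' : y ∈ T₁.leafSet := hyT₁
          rw [hL] at h'
          exact h'
        · have hcast : 2*(n:ℝ)/3 = 2^m := by
            rw [hn2]
            push_cast
            rw [← hbm, pow_succ]
            ring
          rw [hcast, RTree.logb_pow_two]
    have hcovnum : RTree.common B₀ T₂ = 2 ^ m := by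
      rw [RTree.common_eq_numLeaves hcov, hbalB₀.numLeaves_eq, hhB₀]
    obtain ⟨S, hSp, hSB₀, hST₂, hSn⟩ := RTree.main_aux (B₀.numLeaves + T₂.numLeaves) B₀ T₂
      le_rfl hbalB₀ hphyB₀ h₂ (by rw [hcovnum]; exact Nat.one_le_two_pow)
    rw [hcovnum, hhB₀] at hSn
    have hSn' : (m:ℝ)/3 + 1 ≤ (S.numLeaves : ℝ) := by
      have hcst : Real.logb 2 (((2^m : ℕ) : ℝ)) = m := by
        push_cast
        exact RTree.logb_pow_two m
      rw [hcst] at hSn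
      linarith
    obtain ⟨S', hUS, hS'T₁⟩ := (RTree.urel_embeds_transfer hUW).1 S (hlift S hSB₀)
    have hS'p : S'.IsPhylo := (hUS.permList.nodup_iff).mp hSp
    have hlen : (S.numLeaves : ℝ) = (S'.numLeaves : ℝ) := by
      have := hUS.permList.length_eq
      exact_mod_cast congrArg Nat.cast this
    have hle : (S'.numLeaves : ℝ) ≤ (RTree.umast T₁ T₂ : ℝ) := by
      exact_mod_cast RTree.le_umast hS'p hSp hS'T₁ hST₂ hUS.symm
    have hmain : (1 + Real.logb 2 (1-δ)) / (1 - Real.logb 2 δ) * Real.logb 2 (2*(n:ℝ)/3)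
        ≤ (m:ℝ)/3 + 1 := by
      have hmR : (0:ℝ) ≤ (m:ℝ) := Nat.cast_nonneg _
      have s1 : (1 + Real.logb 2 (1-δ)) / (1 - Real.logb 2 δ) * Real.logb 2 (2*(n:ℝ)/3)
          ≤ (1 + Real.logb 2 (1-δ)) / (1 - Real.logb 2 δ) * (m:ℝ) :=
        mul_le_mul_of_nonneg_left hlogn hα0
      have s2 : (1 + Real.logb 2 (1-δ)) / (1 - Real.logb 2 δ) * (m:ℝ) ≤ 1/3 * (m:ℝ) :=
        mul_le_mul_of_nonneg_right hα3 hmR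
      linarith
    linarith
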